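/- In the hammock localization of a tribe, every zig-zag of morphisms is homotopic to a single morphism of the tribe: any right fraction x ← x' → y with left leg a weak equivalence is connected by a homotopy (in the mapping space of the hammock localization) to a single morphism x → y of the tribe. -/

import Mathlib

open CategoryTheory CategoryTheory.Limits

universe v u

namespace Paper

variable {T : Type u} [Category.{v} T]

/-- A morphism is anodyne (w.r.t. a class of fibrations) if it has the left
lifting property against all fibrations. -/
def Anodyne (Fib : MorphismProperty T) : MorphismProperty T :=
  fun _ _ i => ∀ ⦃u w : T⦄ (g : u ⟶ w), Fib g → HasLiftingProperty i g

/-- A tribe structure on a category `T`. -/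
structure TribeStruct (T : Type u) [Category.{v} T] where
  /-- fibrations -/
  Fib : MorphismProperty T
  fib_id : ∀ x : T, Fib (𝟙 x)
  fib_comp : ∀ {x y z : T} (f : x ⟶ y) (g : y ⟶ z), Fib f → Fib g → Fib (f ≫ g)
  /-- (T1): terminal object, all objects fibrant -/
  term : T
  isTerminal : IsTerminal term
  all_fibrant : ∀ x : T, Fib (isTerminal.from x)
  /-- (T2): pullbacks along fibrations exist and fibrations are stable -/
  pullback_exists : ∀ {x y z : T} (f : x ⟶ z) (g : y ⟶ z), Fib g → HasPullback f g
  fib_stable : ∀ {p x y z : T} {fst : p ⟶ x} {snd : p ⟶ y} {f : x ⟶ z} {g : y ⟶ z},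
    IsPullback fst snd f g → Fib g → Fib fst
  /-- (T3): factorization as anodyne followed by fibration -/
  factor : ∀ {x y : T} (f : x ⟶ y), ∃ (z : T) (i : x ⟶ z) (q : z ⟶ y),
    Anodyne Fib i ∧ Fib q ∧ i ≫ q = f
  /-- (T4): anodyne morphisms are stable under pullback along fibrations -/
  anodyne_stable : ∀ {p x y z : T} {fst : p ⟶ x} {snd : p ⟶ y} {f : x ⟶ z} {g : y ⟶ z},
    IsPullback fst snd f g → Anodyne Fib f → Fib g → Anodyne Fib snd

/-- A path object for `x` in a tribe: a factorization of the diagonal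
`x → x × x` as an anodyne morphism followed by a fibration (the product is
presented by an explicit binary product cone). -/
structure PathObject (R : TribeStruct T) (x : T) where
  P : T
  σ : x ⟶ P
  π₀ : P ⟶ x
  π₁ : P ⟶ x
  σ_anodyne : Anodyne R.Fib σ
  σ_π₀ : σ ≫ π₀ = 𝟙 x
  σ_π₁ : σ ≫ π₁ = 𝟙 x
  prod : T
  p₀ : prod ⟶ x
  p₁ : prod ⟶ x
  isProd : IsLimit (BinaryFan.mk p₀ p₁)
  π : P ⟶ prod
  π_p₀ : π ≫ p₀ = π₀
  π_p₁ : π ≫ p₁ = π₁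
  π_fib : R.Fib π

/-- Homotopy of morphisms in a tribe. -/
def Homotopic (R : TribeStruct T) {x y : T} (f g : x ⟶ y) : Prop :=
  ∃ (Po : PathObject R y) (H : x ⟶ Po.P), H ≫ Po.π₀ = f ∧ H ≫ Po.π₁ = g

/-- Homotopy equivalences in a tribe. -/
def IsHtpyEquiv (R : TribeStruct T) {x y : T} (f : x ⟶ y) : Prop :=
  ∃ g : y ⟶ x, Homotopic R (f ≫ g) (𝟙 x) ∧ Homotopic R (g ≫ f) (𝟙 y)

/-- Homotopy equivalences (= weak equivalences) of a tribe as a morphism property. -/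
def hW (R : TribeStruct T) : MorphismProperty T :=
  fun _ _ f => IsHtpyEquiv R f

end Paper

namespace Paper

variable {C : Type u} [Category.{v} C]

/-- A right fraction from `x` to `y` with respect to a class `W` of weak
equivalences:  a diagram `x ⟵ obj ⟶ y` whose left leg lies in `W`. -/
structure Frac (W : MorphismProperty C) (x y : C) where
  obj : C
  v : obj ⟶ x
  s : obj ⟶ y
  hv : W v

/-- Morphisms of fractions: morphisms of the middle objects commuting with
both legs. -/
instance Frac.category (W : MorphismProperty C) (x y : C) : Category (Frac W x y) where
  Hom A B := { f : A.obj ⟶ B.obj // f ≫ B.v = A.v ∧ f ≫ B.s = A.s }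
  id A := ⟨𝟙 A.obj, by simp, by simp⟩
  comp f g := ⟨f.1 ≫ g.1, by rw [Category.assoc, g.2.1, f.2.1],
    by rw [Category.assoc, g.2.2, f.2.2]⟩
  id_comp f := Subtype.ext (Category.id_comp _)
  comp_id f := Subtype.ext (Category.comp_id _)
  assoc f g h := Subtype.ext (Category.assoc _ _ _)

end Paper

namespace Paper

variable {T : Type u} [Category.{v} T]

/-- Every object of a tribe has a path object. -/
lemma exists_pathObject (R : TribeStruct T) (x : T) : Nonempty (PathObject R x) := by
  have hf : R.Fib (R.isTerminal.from x) := R.all_fibrant x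
  haveI : HasPullback (R.isTerminal.from x) (R.isTerminal.from x) :=
    R.pullback_exists _ _ hf
  set f := R.isTerminal.from x with hfdef
  have isProd : IsLimit (BinaryFan.mk (pullback.fst f f) (pullback.snd f f)) := by
    refine BinaryFan.isLimitMk
      (fun s => pullback.lift s.fst s.snd (R.isTerminal.hom_ext _ _))
      (fun s => pullback.lift_fst _ _ _) (fun s => pullback.lift_snd _ _ _)
      (fun s m h1 h2 => ?_)
    apply pullback.hom_ext
    · exact h1.trans (@pullback.lift_fst _ _ _ _ _ _ f f this _ _ _).symm
    · exact h2.trans (@pullback.lift_snd _ _ _ _ _ _ f f this _ _ _).symm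
  obtain ⟨z, i, q, hi, hq, hiq⟩ :=
    R.factor (pullback.lift (𝟙 x) (𝟙 x) rfl : x ⟶ pullback f f)
  refine ⟨⟨z, i, q ≫ pullback.fst f f, q ≫ pullback.snd f f, hi, ?_, ?_,
    pullback f f, pullback.fst f f, pullback.snd f f, isProd, q, rfl, rfl, hq⟩⟩
  · rw [← Category.assoc, hiq, pullback.lift_fst]
  · rw [← Category.assoc, hiq, pullback.lift_snd]

/-- Any morphism extends to a morphism of (chosen) path objects. -/
lemma pathObject_map (R : TribeStruct T) {a b : T} (Po1 : PathObject R a)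
    (Po2 : PathObject R b) (u : a ⟶ b) :
    ∃ L : Po1.P ⟶ Po2.P, L ≫ Po2.π₀ = Po1.π₀ ≫ u ∧ L ≫ Po2.π₁ = Po1.π₁ ≫ u := by
  obtain ⟨m, hm0, hm1⟩ := BinaryFan.IsLimit.lift' Po2.isProd (Po1.π₀ ≫ u) (Po1.π₁ ≫ u)
  simp only [BinaryFan.mk_fst, BinaryFan.mk_snd] at hm0 hm1
  change m ≫ Po2.p₀ = Po1.π₀ ≫ u at hm0
  change m ≫ Po2.p₁ = Po1.π₁ ≫ u at hm1
  have sq : CommSq (u ≫ Po2.σ) Po1.σ Po2.π m := by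
    constructor
    apply BinaryFan.IsLimit.hom_ext Po2.isProd
    · change ((u ≫ Po2.σ) ≫ Po2.π) ≫ Po2.p₀ = (Po1.σ ≫ m) ≫ Po2.p₀
      simp only [BinaryFan.mk_fst, Category.assoc, Po2.π_p₀, hm0]
      rw [Po2.σ_π₀, Category.comp_id, ← Category.assoc, Po1.σ_π₀, Category.id_comp]
    · change ((u ≫ Po2.σ) ≫ Po2.π) ≫ Po2.p₁ = (Po1.σ ≫ m) ≫ Po2.p₁
      simp only [BinaryFan.mk_snd, Category.assoc, Po2.π_p₁, hm1]
      rw [Po2.σ_π₁, Category.comp_id, ← Category.assoc, Po1.σ_π₁, Category.id_comp]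
  letI := Po1.σ_anodyne Po2.π Po2.π_fib
  refine ⟨sq.lift, ?_, ?_⟩
  · rw [← Po2.π_p₀, ← Category.assoc, sq.fac_right, hm0]
  · rw [← Po2.π_p₁, ← Category.assoc, sq.fac_right, hm1]

end Paper

open Paper in
/-- In (the hammock localization of) a tribe, every zig-zag is
homotopic to a single morphism of the tribe: every right fraction
`x ⟵ x' ⟶ y` whose left leg is a weak equivalence is connected, in the category
of right fractions from `x` to `y` (whose nerve computes the mapping space of
the hammock localization), by a zig-zag of morphisms of fractions to the
fraction `x ⟵ x ⟶ y` given by the identity and a single morphism `f : x ⟶ y`. -/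
theorem tribe_fraction_homotopic_to_single_morphism
    {T : Type u} [Category.{v} T] (R : Paper.TribeStruct T) {x y : T}
    (A : Frac (hW R) x y) :
    ∃ (f : x ⟶ y) (hid : IsHtpyEquiv R (𝟙 x)),
      Zigzag A (Frac.mk x (𝟙 x) f hid) := by
  obtain ⟨w, h1, h2⟩ := A.hv
  obtain ⟨Po, H, hH0, hH1⟩ := h1
  obtain ⟨Pox⟩ := exists_pathObject R x
  obtain ⟨Po2⟩ := exists_pathObject R Po.P
  -- extend σ : A.obj ⟶ Po.P to a map of path objects
  obtain ⟨L, hL0, hL1⟩ := pathObject_map R Po Po2 Po.σ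
  -- the pairing (π₁ ≫ v ≫ w ≫ σ, 𝟙) into the product of Po.P with itself
  obtain ⟨m, hm0, hm1⟩ := BinaryFan.IsLimit.lift' Po2.isProd
    (Po.π₁ ≫ A.v ≫ w ≫ Po.σ) (𝟙 Po.P)
  simp only [BinaryFan.mk_fst, BinaryFan.mk_snd] at hm0 hm1
  change m ≫ Po2.p₀ = Po.π₁ ≫ A.v ≫ w ≫ Po.σ at hm0
  change m ≫ Po2.p₁ = 𝟙 Po.P at hm1
  -- the lifting problem whose solution is the homotopy  π₁ ≫ v ≫ w ≫ σ ∼ 𝟙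
  have sq : CommSq (H ≫ L) Po.σ Po2.π m := by
    constructor
    apply BinaryFan.IsLimit.hom_ext Po2.isProd
    · change ((H ≫ L) ≫ Po2.π) ≫ Po2.p₀ = (Po.σ ≫ m) ≫ Po2.p₀
      simp only [BinaryFan.mk_fst, Category.assoc, Po2.π_p₀, hm0, hL0]
      rw [← Category.assoc H, hH0, ← Category.assoc Po.σ, Po.σ_π₁, Category.id_comp,
        Category.assoc]
    · change ((H ≫ L) ≫ Po2.π) ≫ Po2.p₁ = (Po.σ ≫ m) ≫ Po2.p₁
      simp only [BinaryFan.mk_snd, Category.assoc, Po2.π_p₁, hm1, hL1]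
      rw [Category.comp_id, ← Category.assoc, hH1, Category.id_comp]
  letI := Po.σ_anodyne Po2.π Po2.π_fib
  have hK0 : sq.lift ≫ Po2.π₀ = Po.π₁ ≫ A.v ≫ w ≫ Po.σ := by
    rw [← Po2.π_p₀, ← Category.assoc, sq.fac_right, hm0]
  have hK1 : sq.lift ≫ Po2.π₁ = 𝟙 Po.P := by
    rw [← Po2.π_p₁, ← Category.assoc, sq.fac_right, hm1]
  -- the left leg of the middle fraction is a homotopy equivalence
  have hQ : IsHtpyEquiv R (Po.π₁ ≫ A.v) := by
    refine ⟨w ≫ Po.σ, ⟨Po2, sq.lift, ?_, hK1⟩, ?_⟩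
    · rw [hK0]; simp [Category.assoc]
    · have : (w ≫ Po.σ) ≫ Po.π₁ ≫ A.v = w ≫ A.v := by
        rw [← Category.assoc, Category.assoc w, Po.σ_π₁, Category.comp_id]
      rw [this]; exact h2
  have hid : IsHtpyEquiv R (𝟙 x) := by
    refine ⟨𝟙 x, ?_, ?_⟩ <;>
      exact ⟨Pox, Pox.σ, by rw [Pox.σ_π₀]; simp, by rw [Pox.σ_π₁]⟩
  refine ⟨w ≫ A.s, hid, ?_⟩
  set Q : Frac (hW R) x y := ⟨Po.P, Po.π₁ ≫ A.v, Po.π₀ ≫ A.s, hQ⟩ with hQdef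
  set M : Frac (hW R) x y := ⟨A.obj, A.v, A.v ≫ w ≫ A.s, A.hv⟩ with hMdef
  have z1 : Zag A Q := by
    refine Or.inl ⟨⟨Po.σ, ?_, ?_⟩⟩
    · show Po.σ ≫ Po.π₁ ≫ A.v = A.v
      rw [← Category.assoc, Po.σ_π₁, Category.id_comp]
    · show Po.σ ≫ Po.π₀ ≫ A.s = A.s
      rw [← Category.assoc, Po.σ_π₀, Category.id_comp]
  have z2 : Zag Q M := by
    refine Or.inr ⟨⟨H, ?_, ?_⟩⟩
    · show H ≫ Po.π₁ ≫ A.v = A.v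
      rw [← Category.assoc, hH1, Category.id_comp]
    · show H ≫ Po.π₀ ≫ A.s = A.v ≫ w ≫ A.s
      rw [← Category.assoc, hH0, Category.assoc]
  have z3 : Zag M (Frac.mk x (𝟙 x) (w ≫ A.s) hid) := by
    refine Or.inl ⟨⟨A.v, ?_, ?_⟩⟩
    · show A.v ≫ 𝟙 x = A.v
      simp
    · show A.v ≫ w ≫ A.s = A.v ≫ w ≫ A.s
      rfl
  exact ((Zigzag.of_zag z1).trans (Zigzag.of_zag z2)).trans (Zigzag.of_zag z3)
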